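/- Let f_1, ..., f_m, f ∈ Z[x_1,...,x_n] and suppose f vanishes on every common zero of f_1, ..., f_m over the algebraic closure of Q. Then there exist a positive integer t, a nonzero integer a, and polynomials g_1, ..., g_m ∈ Z[x_1,...,x_n] such that a·f^t = f_1·g_1 + ... + f_m·g_m. -/

import Mathlib

open MvPolynomial

noncomputable def piMap {σ K : Type*} [Field K] [Algebra ℚ K] (φ : K →ₗ[ℚ] ℚ)
    (p : MvPolynomial σ K) : MvPolynomial σ ℚ :=
  ∑ d ∈ p.support, MvPolynomial.monomial d (φ (p.coeff d))

lemma coeff_piMap {σ K : Type*} [Field K] [Algebra ℚ K] (φ : K →ₗ[ℚ] ℚ)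
    (p : MvPolynomial σ K) (d : σ →₀ ℕ) : (piMap φ p).coeff d = φ (p.coeff d) := by
  classical
  rw [piMap, MvPolynomial.coeff_sum]
  simp only [MvPolynomial.coeff_monomial]
  rw [Finset.sum_ite_eq' p.support d (fun e => φ (p.coeff e))]
  split_ifs with h
  · rfl
  · rw [MvPolynomial.notMem_support_iff.mp h, map_zero]

lemma piMap_map_mul {σ K : Type*} [Field K] [Algebra ℚ K] (φ : K →ₗ[ℚ] ℚ)
    (q : MvPolynomial σ ℚ) (p : MvPolynomial σ K) :
    piMap φ (MvPolynomial.map (algebraMap ℚ K) q * p) = q * piMap φ p := by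
  classical
  ext d
  rw [coeff_piMap, MvPolynomial.coeff_mul, MvPolynomial.coeff_mul, map_sum]
  refine Finset.sum_congr rfl fun x _ => ?_
  rw [MvPolynomial.coeff_map, coeff_piMap, ← Algebra.smul_def, map_smul, smul_eq_mul]

lemma piMap_map {σ K : Type*} [Field K] [Algebra ℚ K] (φ : K →ₗ[ℚ] ℚ) (hφ : φ 1 = 1)
    (q : MvPolynomial σ ℚ) : piMap φ (MvPolynomial.map (algebraMap ℚ K) q) = q := by
  classical
  have := piMap_map_mul φ q (1 : MvPolynomial σ K)
  rw [mul_one] at this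
  rw [this]
  have h1 : piMap φ (1 : MvPolynomial σ K) = 1 := by
    ext d
    rw [coeff_piMap]
    rw [MvPolynomial.coeff_one, MvPolynomial.coeff_one]
    split_ifs <;> simp [hφ]
  rw [h1, mul_one]

/-- clearing denominators -/
lemma exists_int_clear {σ : Type*} (g : MvPolynomial σ ℚ) :
    ∃ a : ℤ, a ≠ 0 ∧ ∃ G : MvPolynomial σ ℤ,
      MvPolynomial.map (Int.castRingHom ℚ) G = MvPolynomial.C (a : ℚ) * g := by
  induction g using MvPolynomial.induction_on with
  | C q =>
      refine ⟨(q.den : ℤ), by exact_mod_cast q.den_ne_zero, MvPolynomial.C q.num, ?_⟩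
      rw [MvPolynomial.map_C, ← MvPolynomial.C_mul]
      congr 1
      simp only [eq_intCast]
      push_cast
      rw [Rat.mul_comm, Rat.mul_den_eq_num]
  | add p q hp hq =>
      obtain ⟨a, ha, G, hG⟩ := hp
      obtain ⟨b, hb, H, hH⟩ := hq
      refine ⟨a * b, mul_ne_zero ha hb, MvPolynomial.C b * G + MvPolynomial.C a * H, ?_⟩
      rw [map_add, map_mul, map_mul, hG, hH, MvPolynomial.map_C, MvPolynomial.map_C]
      simp only [eq_intCast, Int.cast_mul, MvPolynomial.C_mul]
      ring
  | mul_X p i hp =>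
      obtain ⟨a, ha, G, hG⟩ := hp
      refine ⟨a, ha, G * MvPolynomial.X i, ?_⟩
      rw [map_mul, hG, MvPolynomial.map_X]
      ring

theorem integral_radical_membership {n m : ℕ}
    (f : MvPolynomial (Fin n) ℤ) (F : Fin m → MvPolynomial (Fin n) ℤ)
    (hvanish : ∀ x : Fin n → AlgebraicClosure ℚ,
      (∀ i, MvPolynomial.aeval x (F i) = 0) → MvPolynomial.aeval x f = 0) :
    ∃ t : ℕ, 0 < t ∧ ∃ a : ℤ, a ≠ 0 ∧ ∃ g : Fin m → MvPolynomial (Fin n) ℤ,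
      (MvPolynomial.C a : MvPolynomial (Fin n) ℤ) * f ^ t = ∑ i, F i * g i := by
  classical
  set K := AlgebraicClosure ℚ
  -- polynomials over K
  let ρ : ℤ →+* K := Int.castRingHom K
  let fK := MvPolynomial.map ρ f
  let FK : Fin m → MvPolynomial (Fin n) K := fun i => MvPolynomial.map ρ (F i)
  let I : Ideal (MvPolynomial (Fin n) K) := Ideal.span (Set.range FK)
  have hmem : fK ∈ MvPolynomial.vanishingIdeal K (MvPolynomial.zeroLocus K I) := by
    rw [MvPolynomial.mem_vanishingIdeal_iff]
    intro x hx
    have hFi : ∀ i, MvPolynomial.aeval x (F i) = 0 := by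
      intro i
      have : MvPolynomial.eval x (FK i) = 0 :=
        (MvPolynomial.mem_zeroLocus_iff.mp hx) _ (Ideal.subset_span ⟨i, rfl⟩)
      rw [MvPolynomial.aeval_def, MvPolynomial.eval₂_eq_eval_map]
      exact this
    have := hvanish x hFi
    rw [MvPolynomial.aeval_def, MvPolynomial.eval₂_eq_eval_map] at this
    exact this
  rw [MvPolynomial.vanishingIdeal_zeroLocus_eq_radical] at hmem
  obtain ⟨s, hs⟩ := Ideal.mem_radical_iff.mp hmem
  -- use t = s + 1
  have hpow : fK ^ (s + 1) ∈ I := by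
    rw [pow_succ]
    exact Ideal.mul_mem_right _ _ hs
  obtain ⟨c, hc⟩ := Ideal.mem_span_range_iff_exists_fun.mp hpow
  -- descend to ℚ
  have one_ne : (1 : K) ≠ 0 := one_ne_zero
  have li : LinearIndepOn ℚ id ({1} : Set K) :=
    (linearIndepOn_singleton_iff (R := ℚ) (v := id)).mpr one_ne
  let b := Module.Basis.extend li
  have h1m : (1 : K) ∈ li.extend (Set.subset_univ _) := li.subset_extend _ rfl
  let φ : K →ₗ[ℚ] ℚ := b.coord ⟨1, h1m⟩
  have hφ1 : φ 1 = 1 := by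
    have : b ⟨1, h1m⟩ = 1 := Module.Basis.extend_apply_self li ⟨1, h1m⟩
    calc φ 1 = φ (b ⟨1, h1m⟩) := by rw [this]
    _ = 1 := by simp [φ, Module.Basis.coord_apply, Module.Basis.repr_self]
  -- the maps over ℚ
  let ρ' : ℤ →+* ℚ := Int.castRingHom ℚ
  have hcomp : ∀ p : MvPolynomial (Fin n) ℤ,
      MvPolynomial.map ρ p = MvPolynomial.map (algebraMap ℚ K) (MvPolynomial.map ρ' p) := by
    intro p
    rw [MvPolynomial.map_map, Subsingleton.elim ((algebraMap ℚ K).comp ρ') ρ]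
  -- apply piMap to hc
  have key : ∑ i, (MvPolynomial.map ρ' (F i)) * piMap φ (c i)
      = (MvPolynomial.map ρ' f) ^ (s + 1) := by
    have hPsum : piMap φ (∑ i, c i * FK i)
        = ∑ i, (MvPolynomial.map ρ' (F i)) * piMap φ (c i) := by
      ext d
      rw [coeff_piMap, MvPolynomial.coeff_sum, MvPolynomial.coeff_sum, map_sum]
      refine Finset.sum_congr rfl fun i _ => ?_
      rw [← coeff_piMap φ (c i * FK i)]
      congr 1
      rw [mul_comm (c i) (FK i), show FK i = MvPolynomial.map (algebraMap ℚ K)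
        (MvPolynomial.map ρ' (F i)) from hcomp (F i), piMap_map_mul]
    rw [← hPsum, hc]
    have : fK ^ (s + 1) = MvPolynomial.map (algebraMap ℚ K)
        ((MvPolynomial.map ρ' f) ^ (s + 1)) := by
      rw [map_pow, ← hcomp]
    rw [this, piMap_map φ hφ1]
  -- clear denominators
  choose a ha G hG using fun i => exists_int_clear (piMap φ (c i))
  refine ⟨s + 1, Nat.succ_pos s, ∏ i, a i, Finset.prod_ne_zero_iff.mpr (fun i _ => ha i),
    fun i => MvPolynomial.C (∏ j ∈ Finset.univ.erase i, a j) * G i, ?_⟩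
  apply MvPolynomial.map_injective ρ' Int.cast_injective
  rw [map_mul, map_pow, MvPolynomial.map_C, map_sum]
  rw [← key, Finset.mul_sum]
  refine Finset.sum_congr rfl fun i _ => ?_
  rw [map_mul, map_mul, MvPolynomial.map_C, hG i]
  have : (∏ j, a j : ℤ) = a i * ∏ j ∈ Finset.univ.erase i, a j :=
    (Finset.mul_prod_erase Finset.univ a (Finset.mem_univ i)).symm
  rw [this]
  simp only [eq_intCast, Int.cast_mul, MvPolynomial.C_mul]
  ring
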